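/- Let n be a natural number and let S ⊆ ℂ^n be the common zero set of a family of multivariate polynomials in n variables over ℂ (a Zariski-closed subset of ℂ^n). If S is bounded (with respect to the standard norm on ℂ^n), then S is finite. Equivalently, every infinite Zariski-closed subset of ℂ^n is unbounded, i.e., contains an unbounded sequence of points. -/

import Mathlib

set_option maxHeartbeats 1000000 in
open MvPolynomial in
/-- On a bounded set of the form `zeroLocus I`, each coordinate takes only finitely
many values. -/
lemma coord_image_finite (n : ℕ) (S : Set (Fin n → ℂ))
    (hzar : S = MvPolynomial.zeroLocus ℂ (MvPolynomial.vanishingIdeal ℂ S))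
    (M : ℝ) (hM : ∀ x ∈ S, ‖x‖ ≤ M) (i : Fin n) :
    {c : ℂ | ∃ x ∈ S, x i = c}.Finite := by
  classical
  set R := MvPolynomial (Fin n) ℂ with hR
  set I : Ideal R := MvPolynomial.vanishingIdeal ℂ S with hI
  let A := R ⧸ I
  let a : A := Ideal.Quotient.mk I (MvPolynomial.X i)
  have halgmap : ∀ c : ℂ, algebraMap ℂ A c = Ideal.Quotient.mk I (MvPolynomial.C c) := by
    intro c; rfl
  -- outside the bound, `a - c` is a unit in `A` (weak Nullstellensatz)
  have hunit : ∀ c : ℂ, M < ‖c‖ → IsUnit (a - algebraMap ℂ A c) := by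
    intro c hc
    set J : Ideal R := I ⊔ Ideal.span {MvPolynomial.X i - MvPolynomial.C c} with hJ
    have hempty : MvPolynomial.zeroLocus ℂ J = ∅ := by
      ext y
      simp only [Set.mem_empty_iff_false, iff_false]
      intro hy
      have hyS : y ∈ S := by
        rw [hzar]
        exact fun p hp => hy p (le_sup_left (α := Ideal R) hp)
      have h2 : MvPolynomial.eval y (MvPolynomial.X i - MvPolynomial.C c) = 0 :=
        hy _ (le_sup_right (α := Ideal R) (Ideal.subset_span rfl))
      have hyi : y i = c := by
        have := h2
        rw [map_sub, MvPolynomial.eval_X, MvPolynomial.eval_C, sub_eq_zero] at this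
        exact this
      have : ‖c‖ ≤ M := hyi ▸ le_trans (norm_le_pi_norm y i) (hM y hyS)
      exact absurd hc (not_lt.mpr this)
    have htop : J = ⊤ := by
      have h1 : MvPolynomial.vanishingIdeal ℂ (MvPolynomial.zeroLocus ℂ J) = J.radical :=
        MvPolynomial.vanishingIdeal_zeroLocus_eq_radical J
      rw [hempty, MvPolynomial.vanishingIdeal_empty] at h1
      exact Ideal.radical_eq_top.mp h1.symm
    have hmap : Ideal.map (Ideal.Quotient.mk I) J = ⊤ := by
      rw [htop, Ideal.map_top]
    rw [hJ, Ideal.map_sup, Ideal.map_quotient_self, bot_sup_eq, Ideal.map_span,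
      Set.image_singleton] at hmap
    have hsub : a - algebraMap ℂ A c = Ideal.Quotient.mk I (MvPolynomial.X i - MvPolynomial.C c) := by
      rw [halgmap c, RingHom.map_sub]
    rw [← Ideal.span_singleton_eq_top, hsub]
    exact hmap
  by_cases halg : IsAlgebraic ℂ a
  · -- algebraic case: the coordinate image is contained in the roots of a polynomial
    obtain ⟨h, h0, hh⟩ := halg
    refine (Polynomial.finite_setOf_isRoot h0).subset ?_
    rintro c ⟨x, hxS, rfl⟩
    have key : Polynomial.aeval (MvPolynomial.X i : R) h ∈ I := by
      rw [← Ideal.Quotient.eq_zero_iff_mem]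
      calc (Ideal.Quotient.mk I) (Polynomial.aeval (MvPolynomial.X i : R) h)
          = Polynomial.aeval a h :=
            (Polynomial.aeval_algHom_apply (Ideal.Quotient.mkₐ ℂ I) (MvPolynomial.X i) h).symm
        _ = 0 := hh
    have hx0 : MvPolynomial.eval x (Polynomial.aeval (MvPolynomial.X i : R) h) = 0 :=
      (MvPolynomial.mem_vanishingIdeal_iff.mp key) x hxS
    have : Polynomial.aeval (x i) h = 0 := by
      have h5 := Polynomial.aeval_algHom_apply (MvPolynomial.aeval x (R := ℂ))
        (MvPolynomial.X i) h
      rw [MvPolynomial.aeval_X] at h5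
      rw [h5]
      have h6 : (MvPolynomial.aeval x : R →ₐ[ℂ] ℂ) (Polynomial.aeval (MvPolynomial.X i : R) h)
          = MvPolynomial.eval x (Polynomial.aeval (MvPolynomial.X i : R) h) := by
        rw [← MvPolynomial.coe_aeval_eq_eval]; rfl
      rw [h6, hx0]
    simpa [Polynomial.IsRoot, ← Polynomial.aeval_def] using this
  · -- transcendental case: uncountably many independent resolvents, contradiction
    exfalso
    have htrans : Transcendental ℂ a := halg
    let ι := Set.Ioi M
    let c : ι → ℂ := fun r => ((r : ℝ) : ℂ)
    have hcM : ∀ r : ι, M < ‖c r‖ := by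
      rintro ⟨r, hr⟩
      simp [c, Complex.norm_real]
      exact lt_of_lt_of_le hr (le_abs_self r)
    have hcinj : Function.Injective c := by
      rintro ⟨r, _⟩ ⟨r', _⟩ h
      simpa [c, Subtype.ext_iff] using Complex.ofReal_inj.mp h
    let b : ι → A := fun r => a - algebraMap ℂ A (c r)
    let u : ι → A := fun r => ((hunit (c r) (hcM r)).unit⁻¹ : Aˣ)
    have hub : ∀ r : ι, u r * b r = 1 := by
      intro r
      have h := (hunit (c r) (hcM r)).unit.inv_mul
      simp only [u, b]
      rwa [IsUnit.unit_spec] at h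
    have hli : LinearIndependent ℂ u := by
      rw [linearIndependent_iff']
      intro s g hsum j hj
      have h1 : ∑ k ∈ s, g k • (u k * ∏ m ∈ s, b m) = 0 := by
        calc ∑ k ∈ s, g k • (u k * ∏ m ∈ s, b m)
            = (∑ k ∈ s, g k • u k) * ∏ m ∈ s, b m := by
              rw [Finset.sum_mul]; exact Finset.sum_congr rfl fun k _ => (smul_mul_assoc _ _ _).symm
          _ = 0 := by rw [hsum, zero_mul]
      have hsm : ∀ (t : ℂ) (z : A), algebraMap ℂ A t * z = t • z := fun t z =>
        (Algebra.smul_def t z).symm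
      have h2 : ∑ k ∈ s, algebraMap ℂ A (g k) * ∏ m ∈ s.erase k, b m = 0 := by
        rw [← h1]
        refine Finset.sum_congr rfl fun k hk => ?_
        rw [hsm]
        congr 1
        rw [← Finset.mul_prod_erase s b hk, ← mul_assoc, hub k, one_mul]
      -- build the polynomial
      let Q : Polynomial ℂ := ∑ k ∈ s, Polynomial.C (g k) *
        ∏ m ∈ s.erase k, (Polynomial.X - Polynomial.C (c m))
      have hQa : Polynomial.aeval a Q = 0 := by
        have : Polynomial.aeval a Q = ∑ k ∈ s, algebraMap ℂ A (g k) * ∏ m ∈ s.erase k, b m := by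
          simp only [Q, b, map_sum, map_mul, map_prod, map_sub, Polynomial.aeval_X,
            Polynomial.aeval_C]
        rw [this, h2]
      have hQ0 : Q = 0 := transcendental_iff.mp htrans Q hQa
      have hev : Polynomial.eval (c j) Q = 0 := by rw [hQ0, Polynomial.eval_zero]
      have hev2 : Polynomial.eval (c j) Q
          = g j * ∏ m ∈ s.erase j, (c j - c m) := by
        simp only [Q, Polynomial.eval_finset_sum, Polynomial.eval_mul, Polynomial.eval_C,
          Polynomial.eval_prod, Polynomial.eval_sub, Polynomial.eval_X]
        rw [Finset.sum_eq_single j]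
        · intro k hk hkj
          have hjk : j ∈ s.erase k := Finset.mem_erase.mpr ⟨fun h => hkj h.symm, hj⟩
          rw [Finset.prod_eq_zero hjk (by rw [sub_self]), mul_zero]
        · intro h; exact absurd hj h
      have hprod : ∏ m ∈ s.erase j, (c j - c m) ≠ 0 := by
        refine Finset.prod_ne_zero_iff.mpr fun m hm => ?_
        have hmj : m ≠ j := (Finset.mem_erase.mp hm).1
        exact sub_ne_zero.mpr fun h => hmj (hcinj h.symm)
      have hz : g j * ∏ m ∈ s.erase j, (c j - c m) = 0 := by rw [← hev2, hev]
      exact (mul_eq_zero.mp hz).resolve_right hprod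
    have hcard : (Cardinal.mk ι) ≤ Module.rank ℂ A := hli.cardinal_le_rank
    have hrankA : Module.rank ℂ A ≤ Module.rank ℂ R :=
      LinearMap.rank_le_of_surjective (Ideal.Quotient.mkₐ ℂ I).toLinearMap
        (Ideal.Quotient.mkₐ_surjective ℂ I)
    have hrankR : Module.rank ℂ R ≤ Cardinal.aleph0 := by
      rw [← (MvPolynomial.basisMonomials (Fin n) ℂ).mk_eq_rank'']
      exact Cardinal.mk_le_aleph0
    have hcont : Cardinal.continuum ≤ Cardinal.aleph0 := by
      have hmk : Cardinal.mk ι = Cardinal.continuum := Cardinal.mk_Ioi_real M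
      calc Cardinal.continuum = Cardinal.mk ι := hmk.symm
        _ ≤ Module.rank ℂ A := hcard
        _ ≤ Module.rank ℂ R := hrankA
        _ ≤ Cardinal.aleph0 := hrankR
    exact absurd hcont (not_le.mpr Cardinal.aleph0_lt_continuum)

/-- A bounded Zariski-closed subset of `ℂ^n` (the common zero set of a family of
multivariate polynomials) is finite. -/
theorem bounded_zariski_closed_finite (n : ℕ) (F : Set (MvPolynomial (Fin n) ℂ))
    (S : Set (Fin n → ℂ)) (hS : S = {x : Fin n → ℂ | ∀ p ∈ F, MvPolynomial.eval x p = 0})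
    (hbdd : Bornology.IsBounded S) : S.Finite := by
  have h1 : S = MvPolynomial.zeroLocus ℂ (Ideal.span F) := by
    rw [hS, MvPolynomial.zeroLocus_span]; simp only [MvPolynomial.aeval_eq_eval]
  have hzar : S = MvPolynomial.zeroLocus ℂ (MvPolynomial.vanishingIdeal ℂ S) := by
    refine le_antisymm (MvPolynomial.zeroLocus_vanishingIdeal_le S) ?_
    have hle : Ideal.span F ≤ MvPolynomial.vanishingIdeal ℂ S := by
      rw [h1]
      exact MvPolynomial.le_vanishingIdeal_zeroLocus _
    calc MvPolynomial.zeroLocus ℂ (MvPolynomial.vanishingIdeal ℂ S)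
        ≤ MvPolynomial.zeroLocus ℂ (Ideal.span F) := MvPolynomial.zeroLocus_anti_mono hle
      _ = S := h1.symm
  obtain ⟨M, hM⟩ := isBounded_iff_forall_norm_le.mp hbdd
  have hT : ∀ i : Fin n, {c : ℂ | ∃ x ∈ S, x i = c}.Finite := fun i =>
    coord_image_finite n S hzar M hM i
  refine (Set.Finite.pi fun i => hT i).subset ?_
  intro x hx
  exact fun i _ => ⟨x, hx, rfl⟩
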